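/- TVD property of the semi-discrete first-order Kurganov–Tadmor scheme. Let N ≥ 1, Δx > 0, let f : ℝ → ℝ be continuously differentiable, let v : ℝ → (ZMod N → ℝ) be differentiable in t, and let a : ℝ → (ZMod N → ℝ) be continuous and satisfy, for all t and j, a_j(t) ≥ |f′(ξ)| for every ξ between min(v_j(t), v_{j+1}(t)) and max(v_j(t), v_{j+1}(t)). Suppose v solves d(v_j)/dt = −(1/(2Δx))·(f(v_{j+1}) − f(v_{j−1})) + (1/(2Δx))·(a_j·(v_{j+1} − v_j) − a_{j−1}·(v_j − v_{j−1})) for every j ∈ ZMod N. Then the total variation TV(v(t)) = Σ_{j ∈ ZMod N} |v_{j+1}(t) − v_j(t)| is a nonincreasing function of t. -/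

import Mathlib

open Filter Set Topology

/-- TVD property of the semi-discrete first-order Kurganov–Tadmor scheme on a
periodic grid: if the local speeds `aⱼ(t)` dominate `|f′|` between neighbouring
cell values and `v` solves the dissipative-form scheme
`d vⱼ/dt = −(f(v_{j+1}) − f(v_{j−1}))/(2Δx)
          + (aⱼ(v_{j+1} − vⱼ) − a_{j−1}(vⱼ − v_{j−1}))/(2Δx)`,
then the total variation `Σⱼ |v_{j+1}(t) − vⱼ(t)|` is nonincreasing in `t`. -/
theorem KT_first_order_TVD (N : ℕ) [NeZero N] (Δx : ℝ) (hΔx : 0 < Δx)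
    (f : ℝ → ℝ) (hf : ContDiff ℝ 1 f)
    (v a : ℝ → ZMod N → ℝ)
    (hv : ∀ j : ZMod N, Differentiable ℝ (fun t => v t j))
    (hacont : ∀ j : ZMod N, Continuous (fun t => a t j))
    (haBound : ∀ (t : ℝ) (j : ZMod N) (ξ : ℝ),
      min (v t j) (v t (j + 1)) ≤ ξ → ξ ≤ max (v t j) (v t (j + 1)) →
      |deriv f ξ| ≤ a t j)
    (hode : ∀ (t : ℝ) (j : ZMod N),
      HasDerivAt (fun s => v s j)
        (-(1 / (2 * Δx)) * (f (v t (j + 1)) - f (v t (j - 1))) +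
          (1 / (2 * Δx)) *
            (a t j * (v t (j + 1) - v t j) -
              a t (j - 1) * (v t j - v t (j - 1)))) t) :
    Antitone (fun t => ∑ j : ZMod N, |v t (j + 1) - v t j|) := by
  set g : ℝ → ℝ := fun t => ∑ j : ZMod N, |v t (j + 1) - v t j| with hg
  have hgcont : Continuous g := by
    apply continuous_finset_sum
    intro j _
    exact (((hv (j + 1)).continuous.sub (hv j).continuous)).abs
  -- Key pointwise estimate on the right slope of `g`.
  have key : ∀ t : ℝ, ∃ S : ℝ, S ≤ 0 ∧
      Tendsto (fun z => (z - t)⁻¹ * (g z - g t)) (𝓝[>] t) (𝓝 S) := by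
    intro t
    set w : ZMod N → ℝ := fun j => v t (j + 1) - v t j with hw
    -- divided differences of f
    set lam : ZMod N → ℝ := fun j =>
      if v t (j + 1) = v t j then 0
      else (f (v t (j + 1)) - f (v t j)) / (v t (j + 1) - v t j) with hlam
    have hfd : Differentiable ℝ f := hf.differentiable one_ne_zero
    have hlam_mul : ∀ j : ZMod N,
        f (v t (j + 1)) - f (v t j) = lam j * (v t (j + 1) - v t j) := by
      intro j
      by_cases h : v t (j + 1) = v t j
      · simp [hlam, h]
      · simp only [hlam, if_neg h]
        rw [div_mul_cancel₀]
        exact sub_ne_zero.mpr h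
    have ha_nonneg : ∀ j : ZMod N, 0 ≤ a t j := by
      intro j
      refine le_trans (abs_nonneg (deriv f (v t j)))
        (haBound t j (v t j) (min_le_left _ _) (le_max_left _ _))
    have hlam_le : ∀ j : ZMod N, |lam j| ≤ a t j := by
      intro j
      by_cases h : v t (j + 1) = v t j
      · simp only [hlam, if_pos h, abs_zero]
        exact ha_nonneg j
      · rcases lt_or_gt_of_ne h with hlt | hgt
        · -- v t (j+1) < v t j
          obtain ⟨c, hc, hcd⟩ := exists_deriv_eq_slope f hlt
            hf.continuous.continuousOn hfd.differentiableOn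
          have hlamc : lam j = deriv f c := by
            simp only [hlam, if_neg h, hcd]
            rw [div_eq_div_iff (sub_ne_zero.mpr h) (sub_ne_zero.mpr (Ne.symm h))]
            ring
          rw [hlamc]
          exact haBound t j c (le_of_lt (lt_of_le_of_lt (min_le_right _ _) hc.1))
            (le_of_lt (lt_of_lt_of_le hc.2 (le_max_left _ _)))
        · -- v t j < v t (j+1)
          obtain ⟨c, hc, hcd⟩ := exists_deriv_eq_slope f hgt
            hf.continuous.continuousOn hfd.differentiableOn
          have hlamc : lam j = deriv f c := by
            simp only [hlam, if_neg h, hcd]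
          rw [hlamc]
          exact haBound t j c (le_of_lt (lt_of_le_of_lt (min_le_left _ _) hc.1))
            (le_of_lt (lt_of_lt_of_le hc.2 (le_max_right _ _)))
    set C : ZMod N → ℝ := fun j => (a t j + lam j) / (2 * Δx) with hC
    set D : ZMod N → ℝ := fun j => (a t j - lam j) / (2 * Δx) with hD
    have hC0 : ∀ j, 0 ≤ C j := fun j => div_nonneg
      (by have := hlam_le j; have := abs_le.mp this; linarith)
      (by positivity)
    have hD0 : ∀ j, 0 ≤ D j := fun j => div_nonneg
      (by have := hlam_le j; have := abs_le.mp this; linarith)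
      (by positivity)
    set w' : ZMod N → ℝ := fun j =>
      D (j + 1) * w (j + 1) - (C j + D j) * w j + C (j - 1) * w (j - 1) with hw'
    -- derivative of each increment
    have hderW : ∀ j : ZMod N, HasDerivAt (fun s => v s (j + 1) - v s j) (w' j) t := by
      intro j
      have h1 := hode t (j + 1)
      have h2 := hode t j
      have hder := h1.sub h2
      refine hder.congr_deriv ?_; symm
      have hj1 : j + 1 - 1 = j := add_sub_cancel_right j 1
      have hj2 : j - 1 + 1 = j := sub_add_cancel j 1
      rw [hj1]
      have e1 := hlam_mul (j + 1)
      have e2 := hlam_mul j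
      have e3 := hlam_mul (j - 1)
      rw [hj2] at e3
      simp only [hw', hC, hD, hw, hj2]
      linear_combination (1 / (2 * Δx)) * e1 - (1 / (2 * Δx)) * e3
    -- one-sided limits φ j and their bound
    set φ : ZMod N → ℝ := fun j =>
      if w j = 0 then |w' j| else if 0 < w j then w' j else -w' j with hφ
    have hφ_le : ∀ j : ZMod N, φ j ≤
        D (j + 1) * |w (j + 1)| - (C j + D j) * |w j| + C (j - 1) * |w (j - 1)| := by
      intro j
      by_cases h0 : w j = 0
      · simp only [hφ, if_pos h0]
        have : w' j = D (j + 1) * w (j + 1) + C (j - 1) * w (j - 1) := by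
          simp [hw', h0]
        rw [this, h0]
        calc |D (j + 1) * w (j + 1) + C (j - 1) * w (j - 1)|
            ≤ |D (j + 1) * w (j + 1)| + |C (j - 1) * w (j - 1)| := abs_add_le _ _
          _ = D (j + 1) * |w (j + 1)| + C (j - 1) * |w (j - 1)| := by
              rw [abs_mul, abs_mul, abs_of_nonneg (hD0 _), abs_of_nonneg (hC0 _)]
          _ = D (j + 1) * |w (j + 1)| - (C j + D j) * |(0 : ℝ)| + C (j - 1) * |w (j - 1)| := by
              simp
      · have main : ∀ s : ℝ, s * w j = |w j| → |s| = 1 →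
            s * w' j ≤ D (j + 1) * |w (j + 1)| - (C j + D j) * |w j|
              + C (j - 1) * |w (j - 1)| := by
          intro s hsw hs1
          have b1 : s * (D (j + 1) * w (j + 1)) ≤ D (j + 1) * |w (j + 1)| := by
            calc s * (D (j + 1) * w (j + 1)) ≤ |s * (D (j + 1) * w (j + 1))| :=
                le_abs_self _
              _ = D (j + 1) * |w (j + 1)| := by
                rw [abs_mul, hs1, one_mul, abs_mul, abs_of_nonneg (hD0 _)]
          have b2 : s * (C (j - 1) * w (j - 1)) ≤ C (j - 1) * |w (j - 1)| := by
            calc s * (C (j - 1) * w (j - 1)) ≤ |s * (C (j - 1) * w (j - 1))| :=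
                le_abs_self _
              _ = C (j - 1) * |w (j - 1)| := by
                rw [abs_mul, hs1, one_mul, abs_mul, abs_of_nonneg (hC0 _)]
          have expand : s * w' j = s * (D (j + 1) * w (j + 1))
              - (C j + D j) * |w j| + s * (C (j - 1) * w (j - 1)) := by
            rw [← hsw]; simp only [hw']; ring
          rw [expand]
          linarith [b1, b2]
        rcases lt_or_gt_of_ne h0 with hneg | hpos
        · simp only [hφ, if_neg h0, if_neg (not_lt.mpr (le_of_lt hneg))]
          have := main (-1) (by rw [neg_one_mul, abs_of_neg hneg]) (by norm_num)
          linarith [this]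
        · simp only [hφ, if_neg h0, if_pos hpos]
          have := main 1 (by rw [one_mul, abs_of_pos hpos]) (by norm_num)
          linarith [this]
    refine ⟨∑ j : ZMod N, φ j, ?_, ?_⟩
    · -- the sum of the upper bounds telescopes to 0
      have hsum0 : ∑ j : ZMod N,
          (D (j + 1) * |w (j + 1)| - (C j + D j) * |w j| + C (j - 1) * |w (j - 1)|) = 0 := by
        have h1 : ∑ j : ZMod N, D (j + 1) * |w (j + 1)| = ∑ j : ZMod N, D j * |w j| :=
          Fintype.sum_equiv (Equiv.addRight (1 : ZMod N))
            (fun j => D (j + 1) * |w (j + 1)|) (fun j => D j * |w j|) (fun j => rfl)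
        have h2 : ∑ j : ZMod N, C (j - 1) * |w (j - 1)| = ∑ j : ZMod N, C j * |w j| :=
          Fintype.sum_equiv (Equiv.subRight (1 : ZMod N))
            (fun j => C (j - 1) * |w (j - 1)|) (fun j => C j * |w j|) (fun j => rfl)
        rw [Finset.sum_add_distrib, Finset.sum_sub_distrib, h1, h2]
        have h3 : ∑ j : ZMod N, (C j + D j) * |w j|
            = ∑ j : ZMod N, C j * |w j| + ∑ j : ZMod N, D j * |w j| := by
          rw [← Finset.sum_add_distrib]
          exact Finset.sum_congr rfl fun j _ => by ring
        rw [h3]; ring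
      calc ∑ j : ZMod N, φ j
          ≤ ∑ j : ZMod N,
            (D (j + 1) * |w (j + 1)| - (C j + D j) * |w j| + C (j - 1) * |w (j - 1)|) :=
            Finset.sum_le_sum fun j _ => hφ_le j
        _ = 0 := hsum0
    · -- convergence of the right slope of g to ∑ φ
      have hcomp : ∀ j : ZMod N, Tendsto
          (fun z => (z - t)⁻¹ * (|v z (j + 1) - v z j| - |w j|)) (𝓝[>] t) (𝓝 (φ j)) := by
        intro j
        have hmono : 𝓝[>] t ≤ 𝓝[≠] t :=
          nhdsWithin_mono t fun z hz => (ne_of_gt hz : z ≠ t)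
        have hslope : Tendsto (fun z => (z - t)⁻¹ * ((v z (j + 1) - v z j) - w j))
            (𝓝[>] t) (𝓝 (w' j)) := by
          have := (hasDerivAt_iff_tendsto_slope.mp (hderW j)).mono_left hmono
          refine this.congr fun z => ?_
          rw [slope_def_field, div_eq_inv_mul]
        have hcont : Continuous (fun z => v z (j + 1) - v z j) :=
          (hv (j + 1)).continuous.sub (hv j).continuous
        by_cases h0 : w j = 0
        · simp only [hφ, if_pos h0]
          have habs : Tendsto (fun z => |(z - t)⁻¹ * ((v z (j + 1) - v z j) - w j)|)
              (𝓝[>] t) (𝓝 |w' j|) := hslope.abs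
          refine habs.congr' ?_
          filter_upwards [self_mem_nhdsWithin] with z hz
          have hzt : (0 : ℝ) < z - t := sub_pos.mpr hz
          rw [abs_mul, abs_of_pos (inv_pos.mpr hzt), h0, abs_zero, sub_zero, sub_zero]
        · rcases lt_or_gt_of_ne h0 with hneg | hpos
          · simp only [hφ, if_neg h0, if_neg (not_lt.mpr (le_of_lt hneg))]
            have hev : ∀ᶠ z in 𝓝[>] t, v z (j + 1) - v z j < 0 :=
              ((hcont.tendsto t).eventually (eventually_lt_nhds hneg)).filter_mono
                nhdsWithin_le_nhds
            refine (hslope.neg).congr' ?_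
            filter_upwards [hev] with z hz
            rw [abs_of_neg hz, abs_of_neg hneg]
            ring
          · simp only [hφ, if_neg h0, if_pos hpos]
            have hev : ∀ᶠ z in 𝓝[>] t, 0 < v z (j + 1) - v z j :=
              ((hcont.tendsto t).eventually (eventually_gt_nhds hpos)).filter_mono
                nhdsWithin_le_nhds
            refine hslope.congr' ?_
            filter_upwards [hev] with z hz
            rw [abs_of_pos hz, abs_of_pos hpos]
      have hsumT := tendsto_finset_sum (Finset.univ : Finset (ZMod N))
        (fun j _ => hcomp j)
      refine hsumT.congr fun z => ?_
      rw [hg]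
      rw [← Finset.mul_sum, ← Finset.sum_sub_distrib]
  -- Conclude antitonicity via the Grönwall-type liminf-slope lemma.
  intro s t hst
  have hB := le_gronwallBound_of_liminf_deriv_right_le (f := g) (f' := fun _ => (0 : ℝ))
    (δ := g s) (K := 0) (ε := 0) (a := s) (b := t) hgcont.continuousOn
    (fun x _ r hr => by
      obtain ⟨S, hS0, hT⟩ := key x
      exact ((hT.eventually_lt_const (lt_of_le_of_lt hS0 hr))).frequently)
    le_rfl (fun x _ => by simp) t ⟨hst, le_rfl⟩
  simpa [gronwallBound] using hB
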